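/- Let ρ_i : Δ_i → ℝ, i = 0,…,n, be convex piecewise affine functions with inf-convolution ρ on Δ = Σ_i Δ_i, and suppose S(ρ) is tight. Let φ_i : Δ_i → ℝ be further convex piecewise affine functions with inf-convolution φ such that S(φ) ⪯ S(ρ). For each n-cell D of S(φ) with components D_0,…,D_n: (a) the inf-convolution of the restrictions ρ_i|_{D_i} equals ρ|_D; (b) the mixed subdivision of D induced by the ρ_i|_{D_i} is tight. -/

import Mathlib

open Pointwise

noncomputable section

/-- The standard pairing on `ℝⁿ`. -/
def dot {n : ℕ} (v x : Fin n → ℝ) : ℝ := ∑ i, v i * x i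

/-- The epigraph of a function `ψ` defined on `Λ`. -/
def epigraph {n : ℕ} (Λ : Set (Fin n → ℝ)) (ψ : (Fin n → ℝ) → ℝ) :
    Set ((Fin n → ℝ) × ℝ) :=
  {p | p.1 ∈ Λ ∧ ψ p.1 ≤ p.2}

/-- The support value `h_S(v,1) = inf {⟨v,x⟩ + z : (x,z) ∈ S}`. -/
def suppVal {n : ℕ} (S : Set ((Fin n → ℝ) × ℝ)) (v : Fin n → ℝ) : ℝ :=
  sInf ((fun p => dot v p.1 + p.2) '' S)

/-- The cell `C(ψ,v)`: the projection to `M_ℝ` of the face of the epigraph of `ψ`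
in the direction `(v,1)`. -/
def cell {n : ℕ} (Λ : Set (Fin n → ℝ)) (ψ : (Fin n → ℝ) → ℝ) (v : Fin n → ℝ) :
    Set (Fin n → ℝ) :=
  Prod.fst '' {p | p ∈ epigraph Λ ψ ∧ dot v p.1 + p.2 = suppVal (epigraph Λ ψ) v}

/-- A convex polyhedron: a finite intersection of closed halfspaces. -/
def IsPolyhedron {n : ℕ} (Λ : Set (Fin n → ℝ)) : Prop :=
  ∃ F : Finset ((Fin n → ℝ) × ℝ), Λ = {x | ∀ p ∈ F, dot p.1 x ≤ p.2}

/-- A convex piecewise affine function on `Λ`: the max of finitely many affine functions. -/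
def IsCPA {n : ℕ} (Λ : Set (Fin n → ℝ)) (ψ : (Fin n → ℝ) → ℝ) : Prop :=
  ∃ F : Finset ((Fin n → ℝ) × ℝ), ∃ hF : F.Nonempty,
    ∀ x ∈ Λ, ψ x = F.sup' hF fun p => dot p.1 x + p.2

/-- The inf-convolution `ψ_1 ⊞ ⋯ ⊞ ψ_s` of functions `ψ i` with domains `Λ i`. -/
def infConv {n s : ℕ} (Λ : Fin s → Set (Fin n → ℝ)) (ψ : Fin s → (Fin n → ℝ) → ℝ)
    (x : Fin n → ℝ) : ℝ :=
  sInf {t | ∃ y : Fin s → Fin n → ℝ,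
    (∀ i, y i ∈ Λ i) ∧ (∑ i, y i) = x ∧ (∑ i, ψ i (y i)) = t}

/-- The `i`-th component of a cell `C` of the mixed subdivision: the image under the `i`-th
projection of the set of decomposition tuples realizing the infimum of the inf-convolution. -/
def comp {n s : ℕ} (Λ : Fin s → Set (Fin n → ℝ)) (ψ : Fin s → (Fin n → ℝ) → ℝ)
    (C : Set (Fin n → ℝ)) (i : Fin s) : Set (Fin n → ℝ) :=
  (fun y => y i) '' {y : Fin s → Fin n → ℝ |
    (∀ j, y j ∈ Λ j) ∧ (∑ j, y j) ∈ C ∧ infConv Λ ψ (∑ j, y j) = ∑ j, ψ j (y j)}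

/-- The dimension of a subset of a real vector space: the dimension of its affine span. -/
def dimAff {V : Type*} [AddCommGroup V] [Module ℝ V] (S : Set V) : ℕ :=
  Module.finrank ℝ (affineSpan ℝ S).direction

namespace S16
variable {n : ℕ}

lemma dot_continuous (v : Fin n → ℝ) : Continuous (dot v) := by
  unfold dot
  exact continuous_finset_sum _ fun i _ => (continuous_const.mul (continuous_apply i))

lemma dot_add (v x y : Fin n → ℝ) : dot v (x + y) = dot v x + dot v y := by
  unfold dot
  rw [← Finset.sum_add_distrib]
  exact Finset.sum_congr rfl fun i _ => by simp [mul_add]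

lemma dot_smul (v : Fin n → ℝ) (c : ℝ) (x : Fin n → ℝ) : dot v (c • x) = c * dot v x := by
  unfold dot
  rw [Finset.mul_sum]
  exact Finset.sum_congr rfl fun i _ => by simp [Pi.smul_apply]; ring

lemma dot_sum (v : Fin n → ℝ) {ι : Type*} (t : Finset ι) (f : ι → Fin n → ℝ) :
    dot v (∑ i ∈ t, f i) = ∑ i ∈ t, dot v (f i) := by
  classical
  induction t using Finset.induction with
  | empty => simp [dot]
  | insert _ _ h ih => rw [Finset.sum_insert h, Finset.sum_insert h, dot_add, ih]

lemma dot_sub_left (v w x : Fin n → ℝ) : dot (v - w) x = dot v x - dot w x := by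
  unfold dot; rw [← Finset.sum_sub_distrib]; exact Finset.sum_congr rfl fun i _ => by simp [sub_mul]

lemma dot_sub_right (v x y : Fin n → ℝ) : dot v (x - y) = dot v x - dot v y := by
  unfold dot; rw [← Finset.sum_sub_distrib]; exact Finset.sum_congr rfl fun i _ => by simp [mul_sub]

lemma dot_combo (v : Fin n → ℝ) (a b : ℝ) (x y : Fin n → ℝ) :
    dot v (a • x + b • y) = a * dot v x + b * dot v y := by
  rw [dot_add, dot_smul, dot_smul]

lemma affine_convexOn (p : (Fin n → ℝ) × ℝ) :
    ConvexOn ℝ Set.univ (fun x => dot p.1 x + p.2) := by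
  refine ⟨convex_univ, fun x _ y _ a b ha hb hab => ?_⟩
  simp only [smul_eq_mul]
  rw [dot_combo]
  have : p.2 = a * p.2 + b * p.2 := by rw [← add_mul, hab, one_mul]
  linarith

lemma sup'_affine (F : Finset ((Fin n → ℝ) × ℝ)) (hF : F.Nonempty) :
    Continuous (fun x => F.sup' hF fun p => dot p.1 x + p.2) ∧
    ConvexOn ℝ Set.univ (fun x => F.sup' hF fun p => dot p.1 x + p.2) := by
  induction hF using Finset.Nonempty.cons_induction with
  | singleton a => simp only [Finset.sup'_singleton]
                   exact ⟨((dot_continuous a.1).add continuous_const), affine_convexOn a⟩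
  | cons a s h hs ih =>
      simp only [Finset.sup'_cons hs]
      exact ⟨(((dot_continuous a.1).add continuous_const).max ih.1),
        (affine_convexOn a).sup ih.2⟩

lemma cpa_rep {Λ : Set (Fin n → ℝ)} {ψ : (Fin n → ℝ) → ℝ} (h : IsCPA Λ ψ) :
    ∃ r : (Fin n → ℝ) → ℝ, Continuous r ∧ Set.EqOn ψ r Λ ∧ ConvexOn ℝ Set.univ r := by
  obtain ⟨F, hF, hr⟩ := h
  exact ⟨_, (sup'_affine F hF).1, fun x hx => hr x hx, (sup'_affine F hF).2⟩

lemma convexOn_of_rep {Λ : Set (Fin n → ℝ)} {ψ r : (Fin n → ℝ) → ℝ} (hΛ : Convex ℝ Λ)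
    (heq : Set.EqOn ψ r Λ) (hr : ConvexOn ℝ Set.univ r) : ConvexOn ℝ Λ ψ := by
  refine ⟨hΛ, fun x hx y hy a b ha hb hab => ?_⟩
  rw [heq hx, heq hy, heq (hΛ hx hy ha hb hab)]
  exact hr.2 (Set.mem_univ x) (Set.mem_univ y) ha hb hab

lemma contOn_of_rep {Λ : Set (Fin n → ℝ)} {ψ r : (Fin n → ℝ) → ℝ}
    (heq : Set.EqOn ψ r Λ) (hr : Continuous r) : ContinuousOn ψ Λ :=
  hr.continuousOn.congr heq

def amin (Λ : Set (Fin n → ℝ)) (ψ : (Fin n → ℝ) → ℝ) (v : Fin n → ℝ) : Set (Fin n → ℝ) :=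
  {x | x ∈ Λ ∧ ∀ y ∈ Λ, dot v x + ψ x ≤ dot v y + ψ y}

lemma amin_subset {Λ ψ} {v : Fin n → ℝ} : amin Λ ψ v ⊆ Λ := fun _ hx => hx.1

lemma amin_nonempty {Λ : Set (Fin n → ℝ)} {ψ} (hK : IsCompact Λ) (hne : Λ.Nonempty)
    (hcont : ContinuousOn ψ Λ) (v : Fin n → ℝ) : (amin Λ ψ v).Nonempty := by
  obtain ⟨x, hx, hmin⟩ := hK.exists_isMinOn hne (((dot_continuous v).continuousOn).add hcont)
  exact ⟨x, hx, fun y hy => hmin hy⟩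

lemma amin_isCompact {Λ : Set (Fin n → ℝ)} {ψ r} (hK : IsCompact Λ)
    (heq : Set.EqOn ψ r Λ) (hr : Continuous r) (v : Fin n → ℝ) : IsCompact (amin Λ ψ v) := by
  have hA : amin Λ ψ v = Λ ∩ ⋂ y ∈ Λ, {x | dot v x + r x ≤ dot v y + ψ y} := by
    ext x
    simp only [amin, Set.mem_setOf_eq, Set.mem_inter_iff, Set.mem_iInter]
    constructor
    · rintro ⟨h1, h2⟩; exact ⟨h1, fun y hy => by rw [← heq h1]; exact h2 y hy⟩
    · rintro ⟨h1, h2⟩; exact ⟨h1, fun y hy => by rw [heq h1]; exact h2 y hy⟩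
  rw [hA]
  refine hK.of_isClosed_subset ?_ Set.inter_subset_left
  exact (hK.isClosed.inter (isClosed_biInter fun y hy =>
    isClosed_le ((dot_continuous v).add hr) continuous_const))

lemma amin_convex {Λ : Set (Fin n → ℝ)} {ψ} (hΛ : Convex ℝ Λ) (hψ : ConvexOn ℝ Λ ψ)
    (v : Fin n → ℝ) : Convex ℝ (amin Λ ψ v) := by
  intro x hx y hy a b ha hb hab
  refine ⟨hΛ hx.1 hy.1 ha hb hab, fun z hz => ?_⟩
  have h1 := hψ.2 hx.1 hy.1 ha hb hab
  have h2 := hx.2 z hz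
  have h3 := hy.2 z hz
  have h4 : dot v (a • x + b • y) = a * dot v x + b * dot v y := dot_combo v a b x y
  simp only [smul_eq_mul] at h1
  calc dot v (a • x + b • y) + ψ (a • x + b • y)
      ≤ a * dot v x + b * dot v y + (a * ψ x + b * ψ y) := by rw [h4]; linarith
    _ = a * (dot v x + ψ x) + b * (dot v y + ψ y) := by ring
    _ ≤ a * (dot v z + ψ z) + b * (dot v z + ψ z) :=
        add_le_add (mul_le_mul_of_nonneg_left h2 ha) (mul_le_mul_of_nonneg_left h3 hb)
    _ = dot v z + ψ z := by rw [← add_mul, hab, one_mul]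

lemma suppVal_eq {Λ : Set (Fin n → ℝ)} {ψ} {v x₀ : Fin n → ℝ} (hx₀ : x₀ ∈ amin Λ ψ v) :
    suppVal (epigraph Λ ψ) v = dot v x₀ + ψ x₀ := by
  apply IsLeast.csInf_eq
  constructor
  · exact ⟨(x₀, ψ x₀), ⟨hx₀.1, le_refl _⟩, rfl⟩
  · rintro t ⟨⟨x, z⟩, ⟨hxΛ, hz⟩, rfl⟩
    have := hx₀.2 x hxΛ
    dsimp only
    linarith

lemma cell_eq_amin {Λ : Set (Fin n → ℝ)} {ψ} {v x₀ : Fin n → ℝ} (hx₀ : x₀ ∈ amin Λ ψ v) :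
    cell Λ ψ v = amin Λ ψ v := by
  ext x
  constructor
  · rintro ⟨⟨x', z⟩, ⟨⟨hxΛ, hz⟩, heq⟩, rfl⟩
    dsimp only at heq hz hxΛ
    rw [suppVal_eq hx₀] at heq
    have h1 := hx₀.2 x' hxΛ
    have hzz : z = ψ x' := by linarith
    refine ⟨hxΛ, fun y hy => ?_⟩
    have := hx₀.2 y hy
    linarith
  · intro hx
    refine ⟨(x, ψ x), ⟨⟨hx.1, le_refl _⟩, ?_⟩, rfl⟩
    dsimp only
    rw [suppVal_eq hx₀]
    exact le_antisymm (hx.2 x₀ hx₀.1) (hx₀.2 x hx.1)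

-- appended to dev.lean inside namespace S16 (before `end S16`)
section sys
variable {n s : ℕ} {Λ : Fin s → Set (Fin n → ℝ)} {ψ : Fin s → (Fin n → ℝ) → ℝ}

/-- The defining set of the inf-convolution. -/
def Tset (Λ : Fin s → Set (Fin n → ℝ)) (ψ : Fin s → (Fin n → ℝ) → ℝ) (x : Fin n → ℝ) :
    Set ℝ :=
  {t | ∃ y : Fin s → Fin n → ℝ,
    (∀ i, y i ∈ Λ i) ∧ (∑ i, y i) = x ∧ (∑ i, ψ i (y i)) = t}

lemma infConv_eq_sInf (x : Fin n → ℝ) : infConv Λ ψ x = sInf (Tset Λ ψ x) := rfl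

lemma mem_sum_sets {x : Fin n → ℝ} :
    x ∈ (∑ i, Λ i) ↔ ∃ y : Fin s → Fin n → ℝ, (∀ i, y i ∈ Λ i) ∧ ∑ i, y i = x := by
  rw [Set.mem_finset_sum]
  constructor
  · rintro ⟨g, hg, hsum⟩; exact ⟨g, fun i => hg (Finset.mem_univ i), hsum⟩
  · rintro ⟨y, hy, hsum⟩; exact ⟨y, fun {i} _ => hy i, hsum⟩

lemma infConv_isLeast (hK : ∀ i, IsCompact (Λ i)) (hcont : ∀ i, ContinuousOn (ψ i) (Λ i))
    {x : Fin n → ℝ} (hx : x ∈ ∑ i, Λ i) :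
    ∃ y : Fin s → Fin n → ℝ, (∀ i, y i ∈ Λ i) ∧ ∑ i, y i = x ∧
      (∑ i, ψ i (y i)) = infConv Λ ψ x ∧ IsLeast (Tset Λ ψ x) (infConv Λ ψ x) := by
  obtain ⟨g, hg, hgsum⟩ := mem_sum_sets.mp hx
  set K : Set (Fin s → Fin n → ℝ) := (Set.univ.pi Λ) ∩ {y | ∑ i, y i = x} with hKdef
  have hKc : IsCompact K := (isCompact_univ_pi hK).inter_right
    (isClosed_eq (continuous_finset_sum _ fun i _ => continuous_apply i) continuous_const)
  have hKne : K.Nonempty := ⟨g, fun i _ => hg i, hgsum⟩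
  have hcK : ContinuousOn (fun y : Fin s → Fin n → ℝ => ∑ i, ψ i (y i)) K := by
    refine continuousOn_finset_sum _ fun i _ => ?_
    exact (hcont i).comp (continuous_apply i).continuousOn
      (fun y hy => hy.1 i (Set.mem_univ i))
  obtain ⟨y, hyK, hmin⟩ := hKc.exists_isMinOn hKne hcK
  have hleast : IsLeast (Tset Λ ψ x) (∑ i, ψ i (y i)) := by
    constructor
    · exact ⟨y, fun i => hyK.1 i (Set.mem_univ i), hyK.2, rfl⟩
    · rintro t ⟨y', hy', hsum', rfl⟩
      exact hmin ⟨fun i _ => hy' i, hsum'⟩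
  have : infConv Λ ψ x = ∑ i, ψ i (y i) := hleast.csInf_eq
  exact ⟨y, fun i => hyK.1 i (Set.mem_univ i), hyK.2, this.symm, this ▸ hleast⟩

variable (hK : ∀ i, IsCompact (Λ i)) (hcont : ∀ i, ContinuousOn (ψ i) (Λ i))
  {v : Fin n → ℝ} {a : Fin s → Fin n → ℝ} (ha : ∀ i, a i ∈ amin (Λ i) (ψ i) v)

include hK hcont ha

lemma sum_amin_min : ∀ x ∈ (∑ i, Λ i),
    (∑ i, (dot v (a i) + ψ i (a i))) ≤ dot v x + infConv Λ ψ x := by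
  intro x hx
  obtain ⟨y, hy, hsum, hval, -⟩ := infConv_isLeast hK hcont hx
  have : dot v x + infConv Λ ψ x = ∑ i, (dot v (y i) + ψ i (y i)) := by
    rw [← hval, ← hsum, dot_sum, ← Finset.sum_add_distrib]
  rw [this]
  exact Finset.sum_le_sum fun i _ => (ha i).2 (y i) (hy i)

lemma sum_amin_opt :
    (∑ i, a i) ∈ (∑ i, Λ i) ∧ infConv Λ ψ (∑ i, a i) = ∑ i, ψ i (a i) := by
  have hmem : (∑ i, a i) ∈ (∑ i, Λ i) := mem_sum_sets.mpr ⟨a, fun i => (ha i).1, rfl⟩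
  obtain ⟨y, hy, hsum, hval, hleast⟩ := infConv_isLeast hK hcont hmem
  refine ⟨hmem, le_antisymm ?_ ?_⟩
  · exact hleast.2 ⟨a, fun i => (ha i).1, rfl, rfl⟩
  · have h1 := sum_amin_min hK hcont ha _ hmem
    have h2 : dot v (∑ i, a i) = ∑ i, dot v (a i) := dot_sum v _ a
    have h3 : (∑ i, (dot v (a i) + ψ i (a i))) = (∑ i, dot v (a i)) + ∑ i, ψ i (a i) :=
      Finset.sum_add_distrib
    linarith

lemma sum_amin_mem_amin : (∑ i, a i) ∈ amin (∑ i, Λ i) (infConv Λ ψ) v := by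
  obtain ⟨hmem, hval⟩ := sum_amin_opt hK hcont ha
  refine ⟨hmem, fun x hx => ?_⟩
  have h1 := sum_amin_min hK hcont ha x hx
  have h2 : dot v (∑ i, a i) = ∑ i, dot v (a i) := dot_sum v _ a
  have h3 : (∑ i, (dot v (a i) + ψ i (a i))) = (∑ i, dot v (a i)) + ∑ i, ψ i (a i) :=
    Finset.sum_add_distrib
  rw [hval]
  linarith

lemma cell_inf_eq_amin :
    cell (∑ i, Λ i) (infConv Λ ψ) v = amin (∑ i, Λ i) (infConv Λ ψ) v :=
  cell_eq_amin (sum_amin_mem_amin hK hcont ha)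

lemma opt_tuple_mem_amin {x : Fin n → ℝ} {y : Fin s → Fin n → ℝ}
    (hx : x ∈ amin (∑ i, Λ i) (infConv Λ ψ) v) (hy : ∀ i, y i ∈ Λ i)
    (hsum : ∑ i, y i = x) (hopt : infConv Λ ψ x = ∑ i, ψ i (y i)) :
    ∀ i, y i ∈ amin (Λ i) (ψ i) v := by
  have habar := sum_amin_mem_amin hK hcont ha
  have hveq : dot v x + infConv Λ ψ x = ∑ i, (dot v (a i) + ψ i (a i)) := by
    have h1 := hx.2 _ habar.1
    have h2 := habar.2 x hx.1
    have h3 : dot v (∑ i, a i) = ∑ i, dot v (a i) := dot_sum v _ a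
    have h4 := (sum_amin_opt hK hcont ha).2
    have h5 : (∑ i, (dot v (a i) + ψ i (a i))) = (∑ i, dot v (a i)) + ∑ i, ψ i (a i) :=
      Finset.sum_add_distrib
    linarith
  have hsum2 : (∑ i, (dot v (a i) + ψ i (a i))) = ∑ i, (dot v (y i) + ψ i (y i)) := by
    rw [← hveq, hopt, ← hsum, dot_sum, ← Finset.sum_add_distrib]
  have hle : ∀ i ∈ Finset.univ, dot v (a i) + ψ i (a i) ≤ dot v (y i) + ψ i (y i) :=
    fun i _ => (ha i).2 (y i) (hy i)
  have heach := (Finset.sum_eq_sum_iff_of_le hle).mp hsum2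
  intro i
  refine ⟨hy i, fun z hz => ?_⟩
  rw [← heach i (Finset.mem_univ i)]
  exact (ha i).2 z hz

lemma comp_eq_amin (i : Fin s) :
    comp Λ ψ (cell (∑ i, Λ i) (infConv Λ ψ) v) i = amin (Λ i) (ψ i) v := by
  rw [cell_inf_eq_amin hK hcont ha]
  ext b
  constructor
  · rintro ⟨y, ⟨hy, hmem, hopt⟩, rfl⟩
    exact opt_tuple_mem_amin hK hcont ha hmem hy rfl hopt i
  · intro hb
    have hy : ∀ j, Function.update a i b j ∈ amin (Λ j) (ψ j) v := by
      intro j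
      rcases eq_or_ne j i with rfl | hne
      · rw [Function.update_self]; exact hb
      · rw [Function.update_of_ne hne]; exact ha j
    refine ⟨Function.update a i b, ⟨fun j => (hy j).1,
      sum_amin_mem_amin hK hcont hy, (sum_amin_opt hK hcont hy).2⟩, Function.update_self i b a⟩

lemma cell_inf_eq_sum_amin :
    cell (∑ i, Λ i) (infConv Λ ψ) v = ∑ i, amin (Λ i) (ψ i) v := by
  rw [cell_inf_eq_amin hK hcont ha]
  ext x
  constructor
  · intro hx
    obtain ⟨y, hy, hsum, hval, -⟩ := infConv_isLeast hK hcont hx.1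
    have := opt_tuple_mem_amin hK hcont ha hx hy hsum hval.symm
    exact mem_sum_sets.mpr ⟨y, this, hsum⟩
  · intro hx
    obtain ⟨y, hy, hsum⟩ := mem_sum_sets.mp hx
    rw [← hsum]
    exact sum_amin_mem_amin hK hcont hy

end sys

lemma convex_sum_sets {ι : Type*} (t : Finset ι) (f : ι → Set (Fin n → ℝ))
    (h : ∀ i ∈ t, Convex ℝ (f i)) : Convex ℝ (∑ i ∈ t, f i) := by
  classical
  induction t using Finset.induction with
  | empty => simp only [Finset.sum_empty]; exact convex_singleton (𝕜 := ℝ) (0 : Fin n → ℝ)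
  | insert _ _ hn ih =>
      rename_i a t'
      rw [Finset.sum_insert hn]
      exact (h a (Finset.mem_insert_self a t')).add
        (ih fun i hi => h i (Finset.mem_insert_of_mem hi))

section sys2
variable {s : ℕ} {Λ : Fin s → Set (Fin n → ℝ)} {ψ : Fin s → (Fin n → ℝ) → ℝ}

lemma infConv_convexOn (hK : ∀ i, IsCompact (Λ i)) (hcont : ∀ i, ContinuousOn (ψ i) (Λ i))
    (hconv : ∀ i, Convex ℝ (Λ i)) (hcvx : ∀ i, ConvexOn ℝ (Λ i) (ψ i)) :
    ConvexOn ℝ (∑ i, Λ i) (infConv Λ ψ) := by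
  have hΔ : Convex ℝ (∑ i, Λ i) := convex_sum_sets _ _ fun i _ => hconv i
  refine ⟨hΔ, fun x hx y hy α β hα hβ hab => ?_⟩
  obtain ⟨yx, hyx, hsx, hvx, -⟩ := infConv_isLeast hK hcont hx
  obtain ⟨yy, hyy, hsy, hvy, -⟩ := infConv_isLeast hK hcont hy
  have hmem : α • x + β • y ∈ ∑ i, Λ i := hΔ hx hy hα hβ hab
  obtain ⟨-, -, -, -, hleast⟩ := infConv_isLeast hK hcont hmem
  have hz : ∀ i, α • yx i + β • yy i ∈ Λ i := fun i => (hconv i) (hyx i) (hyy i) hα hβ hab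
  have hsum : (∑ i, (α • yx i + β • yy i)) = α • x + β • y := by
    rw [Finset.sum_add_distrib, ← Finset.smul_sum, ← Finset.smul_sum, hsx, hsy]
  have h1 := hleast.2 ⟨_, hz, hsum, rfl⟩
  have h2 : (∑ i, ψ i (α • yx i + β • yy i)) ≤
      α * (∑ i, ψ i (yx i)) + β * (∑ i, ψ i (yy i)) := by
    rw [Finset.mul_sum, Finset.mul_sum, ← Finset.sum_add_distrib]
    refine Finset.sum_le_sum fun i _ => ?_
    have := (hcvx i).2 (hyx i) (hyy i) hα hβ hab
    simpa using this
  simp only [smul_eq_mul]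
  rw [← hvx, ← hvy]
  linarith

lemma infConv_bddAbove (hK : ∀ i, IsCompact (Λ i)) (hne : ∀ i, (Λ i).Nonempty)
    (hcont : ∀ i, ContinuousOn (ψ i) (Λ i)) :
    ∃ M, ∀ x ∈ (∑ i, Λ i), infConv Λ ψ x ≤ M := by
  have hMi : ∀ i, ∃ Mi, ∀ z ∈ Λ i, ψ i z ≤ Mi := by
    intro i
    obtain ⟨z, hz, hmax⟩ := (hK i).exists_isMaxOn (hne i) (hcont i)
    exact ⟨ψ i z, fun w hw => hmax hw⟩
  choose Mi hMi using hMi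
  refine ⟨∑ i, Mi i, fun x hx => ?_⟩
  obtain ⟨y, hy, hsum, hval, hleast⟩ := infConv_isLeast hK hcont hx
  calc infConv Λ ψ x ≤ ∑ i, ψ i (y i) := hleast.2 ⟨y, hy, hsum, rfl⟩
    _ ≤ ∑ i, Mi i := Finset.sum_le_sum fun i _ => hMi i (y i) (hy i)

end sys2

lemma dimAff_mono {S T : Set (Fin n → ℝ)} (h : S ⊆ T) : dimAff S ≤ dimAff T :=
  Submodule.finrank_mono (AffineSubspace.direction_le (affineSpan_mono ℝ h))

lemma dimAff_le_rank (S : Set (Fin n → ℝ)) : dimAff S ≤ n := by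
  have := Submodule.finrank_le (affineSpan ℝ S).direction
  simpa [dimAff, Module.finrank_pi] using this

lemma dimAff_add_le (A B : Set (Fin n → ℝ)) : dimAff (A + B) ≤ dimAff A + dimAff B := by
  unfold dimAff
  rw [direction_affineSpan, direction_affineSpan, direction_affineSpan]
  have hle : vectorSpan ℝ (A + B) ≤ vectorSpan ℝ A ⊔ vectorSpan ℝ B := by
    rw [vectorSpan_def]
    apply Submodule.span_le.mpr
    rintro d hd
    rw [Set.mem_vsub] at hd
    obtain ⟨p, hp, q, hq, rfl⟩ := hd
    rw [Set.mem_add] at hp hq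
    obtain ⟨a, ha, b, hb, rfl⟩ := hp
    obtain ⟨a', ha', b', hb', rfl⟩ := hq
    have hsplit : (a + b) -ᵥ (a' + b') = (a -ᵥ a') + (b -ᵥ b') := by
      simp only [vsub_eq_sub]; abel
    rw [hsplit]
    exact Submodule.add_mem _
      (Submodule.mem_sup_left (vsub_mem_vectorSpan ℝ ha ha'))
      (Submodule.mem_sup_right (vsub_mem_vectorSpan ℝ hb hb'))
  have h1 : Module.finrank ℝ (vectorSpan ℝ (A + B)) ≤
      Module.finrank ℝ ↥(vectorSpan ℝ A ⊔ vectorSpan ℝ B) := Submodule.finrank_mono hle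
  have h2 := Submodule.finrank_sup_add_finrank_inf_eq (vectorSpan ℝ A) (vectorSpan ℝ B)
  omega

lemma dimAff_zero_set : dimAff (0 : Set (Fin n → ℝ)) = 0 := by
  have : (0 : Set (Fin n → ℝ)) = {0} := rfl
  rw [this]
  unfold dimAff
  rw [direction_affineSpan, vectorSpan_singleton]
  exact finrank_bot ℝ _

lemma dimAff_sum_le {ι : Type*} (t : Finset ι) (f : ι → Set (Fin n → ℝ)) :
    dimAff (∑ i ∈ t, f i) ≤ ∑ i ∈ t, dimAff (f i) := by
  classical
  induction t using Finset.induction with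
  | empty => simpa using le_of_eq dimAff_zero_set
  | insert _ _ hn ih =>
      rename_i a t'
      rw [Finset.sum_insert hn, Finset.sum_insert hn]
      exact le_trans (dimAff_add_le _ _) (by omega)

lemma interior_nonempty_of_dimAff {S : Set (Fin n → ℝ)} (hconv : Convex ℝ S)
    (hne : S.Nonempty) (hdim : dimAff S = n) : (interior S).Nonempty := by
  rw [hconv.interior_nonempty_iff_affineSpan_eq_top]
  have htop : (affineSpan ℝ S).direction = ⊤ := by
    apply Submodule.eq_top_of_finrank_eq
    have : Module.finrank ℝ ↥(affineSpan ℝ S).direction = dimAff S := rfl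
    rw [this, hdim, Module.finrank_pi]
    simp
  obtain ⟨x, hx⟩ := hne
  exact (AffineSubspace.direction_eq_top_iff_of_nonempty
    ⟨x, subset_affineSpan ℝ S hx⟩).mp htop

lemma dimAff_empty : dimAff (∅ : Set (Fin n → ℝ)) = 0 := by
  unfold dimAff
  rw [show affineSpan ℝ (∅ : Set (Fin n → ℝ)) = ⊥ from AffineSubspace.span_empty ℝ _ _,
    AffineSubspace.direction_bot]
  exact finrank_bot ℝ _

lemma exists_amin_of_mem_interior {Δ : Set (Fin n → ℝ)} {ρ : (Fin n → ℝ) → ℝ} {M : ℝ}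
    (hconv : ConvexOn ℝ Δ ρ) (hbdd : ∀ x ∈ Δ, ρ x ≤ M) {x₀ : Fin n → ℝ}
    (hx₀ : x₀ ∈ interior Δ) : ∃ v, x₀ ∈ amin Δ ρ v := by
  classical
  set E : Set ((Fin n → ℝ) × ℝ) := epigraph Δ ρ with hEdef
  have hEconv : Convex ℝ E := convexOn_iff_convex_epigraph.mp hconv
  have hx₀Δ : x₀ ∈ Δ := interior_subset hx₀
  -- a point in the interior of the epigraph
  have hstar : ((x₀, M + 1) : (Fin n → ℝ) × ℝ) ∈ interior E := by
    apply interior_maximal (t := (interior Δ) ×ˢ Set.Ioi M)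
    · rintro ⟨x, z⟩ ⟨hxi, hz⟩
      exact ⟨interior_subset hxi, le_of_lt (lt_of_le_of_lt (hbdd x (interior_subset hxi)) hz)⟩
    · exact isOpen_interior.prod isOpen_Ioi
    · exact ⟨hx₀, by simp⟩
  -- the point (x₀, ρ x₀) is not in the interior of the epigraph
  have hpE : ((x₀, ρ x₀) : (Fin n → ℝ) × ℝ) ∈ E := ⟨hx₀Δ, le_refl _⟩
  have hpnot : ((x₀, ρ x₀) : (Fin n → ℝ) × ℝ) ∉ interior E := by
    intro h
    have hc : ContinuousAt (fun t : ℝ => ((x₀, ρ x₀ - t) : (Fin n → ℝ) × ℝ)) 0 := by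
      apply ContinuousAt.prodMk continuousAt_const
      exact (continuous_const.sub continuous_id).continuousAt
    have hnb : E ∈ nhds ((x₀, ρ x₀) : (Fin n → ℝ) × ℝ) := mem_interior_iff_mem_nhds.mp h
    have hpre : (fun t : ℝ => ((x₀, ρ x₀ - t) : (Fin n → ℝ) × ℝ)) ⁻¹' E ∈ nhds (0 : ℝ) := by
      have := hc.preimage_mem_nhds (by simpa using hnb)
      simpa using this
    obtain ⟨ε, hε, hball⟩ := Metric.mem_nhds_iff.mp hpre
    have hmem : (ε / 2 : ℝ) ∈ Metric.ball (0 : ℝ) ε := by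
      rw [Metric.mem_ball, dist_zero_right, Real.norm_eq_abs, abs_of_pos (half_pos hε)]
      linarith
    have := (hball hmem).2
    simp only at this
    linarith
  obtain ⟨f, hf⟩ := geometric_hahn_banach_open_point (hEconv.interior) isOpen_interior hpnot
  -- f a ≤ f p for all a in E
  have hfle : ∀ a ∈ E, f a ≤ f ((x₀, ρ x₀) : (Fin n → ℝ) × ℝ) := by
    intro a haE
    have hT : Filter.Tendsto (fun t : ℝ => f a + t * (f ((x₀, M+1) : (Fin n → ℝ) × ℝ) - f a))
        (nhdsWithin 0 (Set.Ioi 0)) (nhds (f a)) := by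
      have : Filter.Tendsto (fun t : ℝ => f a + t * (f ((x₀, M+1) : (Fin n → ℝ) × ℝ) - f a))
          (nhds 0) (nhds (f a + 0 * (f ((x₀, M+1) : (Fin n → ℝ) × ℝ) - f a))) := by
        apply Filter.Tendsto.add tendsto_const_nhds
        exact (continuous_id.mul continuous_const).tendsto 0
      simpa using this.mono_left nhdsWithin_le_nhds
    refine le_of_tendsto hT ?_
    have hIoc : Set.Ioc (0:ℝ) 1 ∈ nhdsWithin (0:ℝ) (Set.Ioi 0) := by
      apply Ioc_mem_nhdsGT_of_mem
      constructor <;> norm_num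
    filter_upwards [hIoc] with t ht
    have hmemI : t • ((x₀, M+1) : (Fin n → ℝ) × ℝ) + (1 - t) • a ∈ interior E :=
      hEconv.combo_interior_self_mem_interior hstar haE ht.1 (by linarith [ht.2]) (by ring)
    have := hf _ hmemI
    have hlin : f (t • ((x₀, M+1) : (Fin n → ℝ) × ℝ) + (1 - t) • a)
        = f a + t * (f ((x₀, M+1) : (Fin n → ℝ) × ℝ) - f a) := by
      rw [map_add, map_smul, map_smul]
      simp only [smul_eq_mul]
      ring
    rw [hlin] at this
    exact le_of_lt this
  -- decompose f
  set c : ℝ := f ((0 : Fin n → ℝ), (1 : ℝ)) with hcdef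
  have hflin : ∀ (x : Fin n → ℝ) (z : ℝ), f (x, z) = f (x, 0) + z * c := by
    intro x z
    have : ((x, z) : (Fin n → ℝ) × ℝ) = (x, 0) + z • ((0 : Fin n → ℝ), (1:ℝ)) := by
      simp [Prod.ext_iff]
    rw [this, map_add, map_smul, smul_eq_mul]
  have hcneg : c < 0 := by
    have h1 := hf _ hstar
    rw [hflin x₀ (M+1), hflin x₀ (ρ x₀)] at h1
    have h2 : ρ x₀ ≤ M := hbdd x₀ hx₀Δ
    nlinarith
  set u : Fin n → ℝ := fun i => f ((Pi.single i 1 : Fin n → ℝ), 0) with hudef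
  have hfx : ∀ x : Fin n → ℝ, f (x, 0) = ∑ i, x i * u i := by
    intro x
    have hx : ((x, 0) : (Fin n → ℝ) × ℝ) = ∑ i, (x i) • ((Pi.single i 1 : Fin n → ℝ), 0) := by
      rw [Prod.ext_iff]
      constructor
      · simp only [Prod.fst_sum, Prod.smul_mk]
        rw [show (x : Fin n → ℝ) = ∑ i, Pi.single i (x i) from (Finset.univ_sum_single x).symm]
        apply Finset.sum_congr rfl
        intro i _
        funext j
        rcases eq_or_ne j i with rfl | hne
        · simp
        · simp [Pi.single_apply, hne]
      · simp [Prod.snd_sum]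
    rw [hx, map_sum]
    apply Finset.sum_congr rfl
    intro i _
    rw [map_smul, smul_eq_mul]
  -- the subgradient direction
  refine ⟨fun i => u i / c, ?_⟩
  have hdotv : ∀ x : Fin n → ℝ, dot (fun i => u i / c) x = (∑ i, x i * u i) / c := by
    intro x
    unfold dot
    rw [Finset.sum_div]
    apply Finset.sum_congr rfl
    intro i _
    field_simp
  refine ⟨hx₀Δ, fun y hy => ?_⟩
  have h1 := hfle (y, ρ y) ⟨hy, le_refl _⟩
  rw [hflin y (ρ y), hflin x₀ (ρ x₀), hfx y, hfx x₀] at h1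
  rw [hdotv y, hdotv x₀]
  set A := ∑ i, y i * u i
  set B := ∑ i, x₀ i * u i
  have hcne : c ≠ 0 := ne_of_lt hcneg
  have h2 := mul_le_mul_of_nonpos_right h1 (inv_nonpos.mpr (le_of_lt hcneg))
  calc B / c + ρ x₀ = (B + ρ x₀ * c) * c⁻¹ := by field_simp
    _ ≤ (A + ρ y * c) * c⁻¹ := h2
    _ = A / c + ρ y := by field_simp

end S16

open S16 in
theorem stmt16 {n : ℕ} (Λ : Fin (n + 1) → Set (Fin n → ℝ))
    (hΛ : ∀ i, ∃ F : Finset (Fin n → ℝ), Λ i = convexHull ℝ (↑F : Set (Fin n → ℝ)))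
    (ρs φs : Fin (n + 1) → (Fin n → ℝ) → ℝ)
    (hρ : ∀ i, IsCPA (Λ i) (ρs i)) (hφ : ∀ i, IsCPA (Λ i) (φs i))
    (htight : ∀ v, dimAff (cell (∑ i, Λ i) (infConv Λ ρs) v) = n →
      (∑ i, dimAff (comp Λ ρs (cell (∑ i, Λ i) (infConv Λ ρs) v) i)) = n)
    (hrefines : ∀ v, ∃ w,
      cell (∑ i, Λ i) (infConv Λ ρs) v ⊆ cell (∑ i, Λ i) (infConv Λ φs) w ∧
      ∀ i, comp Λ ρs (cell (∑ i, Λ i) (infConv Λ ρs) v) i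
          ⊆ comp Λ φs (cell (∑ i, Λ i) (infConv Λ φs) w) i)
    (w : Fin n → ℝ)
    (hD : dimAff (cell (∑ i, Λ i) (infConv Λ φs) w) = n) :
    (∀ x ∈ cell (∑ i, Λ i) (infConv Λ φs) w,
      infConv (fun i => comp Λ φs (cell (∑ i, Λ i) (infConv Λ φs) w) i) ρs x
        = infConv Λ ρs x) ∧
    (∀ v, dimAff (cell (∑ i, comp Λ φs (cell (∑ i, Λ i) (infConv Λ φs) w) i)
          (infConv (fun i => comp Λ φs (cell (∑ i, Λ i) (infConv Λ φs) w) i) ρs) v) = n →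
      (∑ i, dimAff
        (comp (fun i => comp Λ φs (cell (∑ i, Λ i) (infConv Λ φs) w) i) ρs
          (cell (∑ i, comp Λ φs (cell (∑ i, Λ i) (infConv Λ φs) w) i)
            (infConv (fun i => comp Λ φs (cell (∑ i, Λ i) (infConv Λ φs) w) i) ρs) v)
          i)) = n) := by
  classical
  have hKΛ : ∀ i, IsCompact (Λ i) := by
    intro i; obtain ⟨F, hF⟩ := hΛ i; rw [hF]; exact F.finite_toSet.isCompact_convexHull ℝ
  have hCΛ : ∀ i, Convex ℝ (Λ i) := by
    intro i; obtain ⟨F, hF⟩ := hΛ i; rw [hF]; exact convex_convexHull ℝ _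
  by_cases hne : ∀ i, (Λ i).Nonempty
  swap
  · -- some Λ i is empty; then the cell is empty and n = 0
    push_neg at hne
    obtain ⟨i₀, hi₀⟩ := hne
    have hΔ : (∑ i, Λ i) = (∅ : Set (Fin n → ℝ)) := by
      ext x
      simp only [Set.mem_empty_iff_false, iff_false]
      intro hx
      obtain ⟨y, hy, -⟩ := mem_sum_sets.mp hx
      have := hy i₀
      rw [hi₀] at this
      exact this
    have hcell : cell (∑ i, Λ i) (infConv Λ φs) w = ∅ := by
      ext x
      simp only [Set.mem_empty_iff_false, iff_false]
      rintro ⟨p, ⟨⟨hp1, -⟩, -⟩, rfl⟩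
      rw [hΔ] at hp1
      exact hp1
    rw [hcell] at hD
    rw [dimAff_empty] at hD
    constructor
    · intro x hx
      rw [hcell] at hx
      exact absurd hx (Set.notMem_empty x)
    · intro v _
      have hz : ∀ S : Set (Fin n → ℝ), dimAff S = 0 := fun S =>
        Nat.le_zero.mp (hD ▸ dimAff_le_rank S)
      rw [Finset.sum_eq_zero fun i _ => hz _]
      exact hD

  · -- main case: all Λ i nonempty
    obtain ⟨rρ, hrρc, hrρe, hrρv⟩ :
        ∃ r : Fin (n+1) → (Fin n → ℝ) → ℝ, (∀ i, Continuous (r i)) ∧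
          (∀ i, Set.EqOn (ρs i) (r i) (Λ i)) ∧ (∀ i, ConvexOn ℝ Set.univ (r i)) := by
      choose r h1 h2 h3 using fun i => cpa_rep (hρ i)
      exact ⟨r, h1, h2, h3⟩
    obtain ⟨rφ, hrφc, hrφe, hrφv⟩ :
        ∃ r : Fin (n+1) → (Fin n → ℝ) → ℝ, (∀ i, Continuous (r i)) ∧
          (∀ i, Set.EqOn (φs i) (r i) (Λ i)) ∧ (∀ i, ConvexOn ℝ Set.univ (r i)) := by
      choose r h1 h2 h3 using fun i => cpa_rep (hφ i)
      exact ⟨r, h1, h2, h3⟩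
    have hcontρ : ∀ i, ContinuousOn (ρs i) (Λ i) := fun i => contOn_of_rep (hrρe i) (hrρc i)
    have hcontφ : ∀ i, ContinuousOn (φs i) (Λ i) := fun i => contOn_of_rep (hrφe i) (hrφc i)
    have hcvxρ : ∀ i, ConvexOn ℝ (Λ i) (ρs i) := fun i => convexOn_of_rep (hCΛ i) (hrρe i) (hrρv i)
    have hcvxφ : ∀ i, ConvexOn ℝ (Λ i) (φs i) := fun i => convexOn_of_rep (hCΛ i) (hrφe i) (hrφv i)
    choose aφ haφ using fun i => amin_nonempty (hKΛ i) (hne i) (hcontφ i) w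
    have comp_eq : ∀ i, comp Λ φs (cell (∑ i, Λ i) (infConv Λ φs) w) i
        = amin (Λ i) (φs i) w := comp_eq_amin hKΛ hcontφ haφ
    simp only [comp_eq]
    -- notation
    have hAwK : ∀ i, IsCompact (amin (Λ i) (φs i) w) :=
      fun i => amin_isCompact (hKΛ i) (hrφe i) (hrφc i) w
    have hAwne : ∀ i, (amin (Λ i) (φs i) w).Nonempty := fun i => ⟨aφ i, haφ i⟩
    have hAwconv : ∀ i, Convex ℝ (amin (Λ i) (φs i) w) :=
      fun i => amin_convex (hCΛ i) (hcvxφ i) w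
    have hAwsub : ∀ i, amin (Λ i) (φs i) w ⊆ Λ i := fun i => amin_subset
    have hcontρA : ∀ i, ContinuousOn (ρs i) (amin (Λ i) (φs i) w) :=
      fun i => (hcontρ i).mono (hAwsub i)
    have hDcell : cell (∑ i, Λ i) (infConv Λ φs) w
        = amin (∑ i, Λ i) (infConv Λ φs) w := cell_inf_eq_amin hKΛ hcontφ haφ
    have hDeq : cell (∑ i, Λ i) (infConv Λ φs) w
        = ∑ i, amin (Λ i) (φs i) w := cell_inf_eq_sum_amin hKΛ hcontφ haφ
    have hDsubΔ : cell (∑ i, Λ i) (infConv Λ φs) w ⊆ ∑ i, Λ i := by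
      rw [hDcell]; exact amin_subset
    have hρconv : ConvexOn ℝ (∑ i, Λ i) (infConv Λ ρs) :=
      infConv_convexOn hKΛ hcontρ hCΛ hcvxρ
    obtain ⟨Mρ, hMρ⟩ := infConv_bddAbove hKΛ hne hcontρ
    -- the key step at interior points
    have hMAINint : ∀ x, x ∈ cell (∑ i, Λ i) (infConv Λ φs) w → x ∈ interior (∑ i, Λ i) →
        ∃ y : Fin (n+1) → Fin n → ℝ, (∀ i, y i ∈ amin (Λ i) (φs i) w) ∧ ∑ i, y i = x ∧
          (∑ i, ρs i (y i)) = infConv Λ ρs x := by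
      intro x hxD hxint
      obtain ⟨v, hv⟩ := exists_amin_of_mem_interior hρconv hMρ hxint
      have hxcell : x ∈ cell (∑ i, Λ i) (infConv Λ ρs) v := by
        rw [cell_eq_amin hv]; exact hv
      obtain ⟨w', hsub, hcompsub⟩ := hrefines v
      obtain ⟨y, hy, hsum, hval, hleast⟩ := infConv_isLeast hKΛ hcontρ (amin_subset hv)
      choose aw' haw' using fun i => amin_nonempty (hKΛ i) (hne i) (hcontφ i) w'
      have hyiw' : ∀ i, y i ∈ amin (Λ i) (φs i) w' := by
        intro i
        have hmem : y i ∈ comp Λ ρs (cell (∑ i, Λ i) (infConv Λ ρs) v) i := by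
          refine ⟨y, ⟨hy, ?_, ?_⟩, rfl⟩
          · rw [hsum]; exact hxcell
          · rw [hsum, ← hval]
        have := hcompsub i hmem
        rwa [comp_eq_amin hKΛ hcontφ haw' i] at this
      have hφopt : infConv Λ φs (∑ i, y i) = ∑ i, φs i (y i) :=
        (sum_amin_opt hKΛ hcontφ hyiw').2
      have hxamin : x ∈ amin (∑ i, Λ i) (infConv Λ φs) w := by rwa [hDcell] at hxD
      have hyAw : ∀ i, y i ∈ amin (Λ i) (φs i) w :=
        opt_tuple_mem_amin hKΛ hcontφ haφ hxamin hy hsum (by rw [← hsum]; exact hφopt)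
      exact ⟨y, hyAw, hsum, hval⟩
    -- upgrade to all of D via a limit argument
    have hDconv : Convex ℝ (cell (∑ i, Λ i) (infConv Λ φs) w) := by
      rw [hDeq]; exact convex_sum_sets _ _ fun i _ => hAwconv i
    have hDne : (cell (∑ i, Λ i) (infConv Λ φs) w).Nonempty := by
      rw [hDeq]
      exact ⟨∑ i, aφ i, mem_sum_sets.mpr ⟨aφ, haφ, rfl⟩⟩
    obtain ⟨x₀, hx₀⟩ := interior_nonempty_of_dimAff hDconv hDne hD
    have hMAIN : ∀ x, x ∈ cell (∑ i, Λ i) (infConv Λ φs) w →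
        ∃ y : Fin (n+1) → Fin n → ℝ, (∀ i, y i ∈ amin (Λ i) (φs i) w) ∧ ∑ i, y i = x ∧
          (∑ i, ρs i (y i)) = infConv Λ ρs x := by
      intro x hx
      set xm : ℕ → (Fin n → ℝ) :=
        fun m => (1/(m+1) : ℝ) • x₀ + (1 - 1/(m+1) : ℝ) • x with hxmdef
      have hpos : ∀ m : ℕ, (0:ℝ) < 1/(m+1) := fun m => by positivity
      have hble : ∀ m : ℕ, (0:ℝ) ≤ 1 - 1/(m+1) := by
        intro m
        have h1 : (1:ℝ) ≤ (m:ℝ) + 1 := by exact_mod_cast Nat.one_le_iff_ne_zero.mpr (Nat.succ_ne_zero m)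
        have := div_le_one_of_le₀ h1 (by positivity)
        linarith
      have hxmD : ∀ m, xm m ∈ interior (cell (∑ i, Λ i) (infConv Λ φs) w) := fun m =>
        hDconv.combo_interior_self_mem_interior hx₀ hx (hpos m) (hble m) (by ring)
      have hxmint : ∀ m, xm m ∈ interior (∑ i, Λ i) := fun m =>
        interior_mono hDsubΔ (hxmD m)
      choose y hy1 hy2 hy3 using fun m =>
        hMAINint (xm m) (interior_subset (hxmD m)) (hxmint m)
      have hKpi : IsCompact (Set.univ.pi fun i => amin (Λ i) (φs i) w) :=
        isCompact_univ_pi hAwK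
      obtain ⟨ys, hys, σf, hσmono, hσtend⟩ :=
        hKpi.tendsto_subseq (x := y) (fun m => Set.mem_univ_pi.mpr (hy1 m))
      have hysA : ∀ i, ys i ∈ amin (Λ i) (φs i) w := Set.mem_univ_pi.mp hys
      have h1tend : Filter.Tendsto (fun m : ℕ => (1/(m+1) : ℝ)) Filter.atTop (nhds 0) :=
        tendsto_one_div_add_atTop_nhds_zero_nat
      have hxmtend : Filter.Tendsto xm Filter.atTop (nhds x) := by
        have : Filter.Tendsto xm Filter.atTop (nhds ((0:ℝ) • x₀ + (1 - 0 : ℝ) • x)) := by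
          exact (h1tend.smul tendsto_const_nhds).add
            ((tendsto_const_nhds.sub h1tend).smul tendsto_const_nhds)
        simpa using this
      have hσtop : Filter.Tendsto σf Filter.atTop Filter.atTop := hσmono.tendsto_atTop
      -- sum of the limit tuple
      have hsumcont : Continuous (fun p : Fin (n+1) → Fin n → ℝ => ∑ i, p i) :=
        continuous_finset_sum _ fun i _ => continuous_apply i
      have hsums : Filter.Tendsto (fun k => ∑ i, y (σf k) i) Filter.atTop
          (nhds (∑ i, ys i)) := (hsumcont.tendsto ys).comp hσtend
      have hsums' : (fun k => ∑ i, y (σf k) i) = fun k => xm (σf k) := by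
        funext k; exact hy2 (σf k)
      have hsumx : (∑ i, ys i) = x := by
        refine tendsto_nhds_unique hsums ?_
        rw [hsums']
        exact hxmtend.comp hσtop
      -- the value of the limit tuple
      have hFc : Continuous (fun p : Fin (n+1) → Fin n → ℝ => ∑ i, rρ i (p i)) :=
        continuous_finset_sum _ fun i _ => (hrρc i).comp (continuous_apply i)
      have hvtend : Filter.Tendsto (fun k => ∑ i, rρ i (y (σf k) i)) Filter.atTop
          (nhds (∑ i, rρ i (ys i))) := (hFc.tendsto ys).comp hσtend
      have hveq : ∀ m, (∑ i, rρ i (y m i)) = infConv Λ ρs (xm m) := by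
        intro m
        rw [← hy3 m]
        exact Finset.sum_congr rfl fun i _ => (hrρe i (hAwsub i (hy1 m i))).symm
      have hysval : (∑ i, ρs i (ys i)) = ∑ i, rρ i (ys i) :=
        Finset.sum_congr rfl fun i _ => hrρe i (hAwsub i (hysA i))
      obtain ⟨-, -, -, -, hleastx⟩ := infConv_isLeast hKΛ hcontρ (hDsubΔ hx)
      have hge : infConv Λ ρs x ≤ ∑ i, ρs i (ys i) :=
        hleastx.2 ⟨ys, fun i => hAwsub i (hysA i), hsumx, rfl⟩
      have hx₀Δ : x₀ ∈ ∑ i, Λ i := hDsubΔ (interior_subset hx₀)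
      have hxΔ : x ∈ ∑ i, Λ i := hDsubΔ hx
      have hub : ∀ m, infConv Λ ρs (xm m) ≤
          (1/(m+1) : ℝ) * infConv Λ ρs x₀ + (1 - 1/(m+1) : ℝ) * infConv Λ ρs x := by
        intro m
        have h := hρconv.2 hx₀Δ hxΔ (le_of_lt (hpos m)) (hble m) (by ring)
        simp only [smul_eq_mul] at h
        exact h
      have hubtend : Filter.Tendsto
          (fun k => (1/(σf k+1) : ℝ) * infConv Λ ρs x₀ + (1 - 1/(σf k+1) : ℝ) * infConv Λ ρs x)
          Filter.atTop (nhds (infConv Λ ρs x)) := by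
        have h2 := h1tend.comp hσtop
        have : Filter.Tendsto
            (fun k => (1/(σf k+1) : ℝ) * infConv Λ ρs x₀ + (1 - 1/(σf k+1) : ℝ) * infConv Λ ρs x)
            Filter.atTop (nhds ((0:ℝ) * infConv Λ ρs x₀ + (1 - 0 : ℝ) * infConv Λ ρs x)) := by
          exact (h2.mul tendsto_const_nhds).add ((tendsto_const_nhds.sub h2).mul tendsto_const_nhds)
        simpa using this
      have hle : (∑ i, rρ i (ys i)) ≤ infConv Λ ρs x := by
        refine le_of_tendsto_of_tendsto' hvtend hubtend ?_
        intro k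
        rw [hveq (σf k)]
        exact hub (σf k)
      exact ⟨ys, hysA, hsumx, le_antisymm (by rw [hysval]; exact hle) hge⟩
    -- part (a)
    have hpartA : ∀ x ∈ cell (∑ i, Λ i) (infConv Λ φs) w,
        infConv (fun i => amin (Λ i) (φs i) w) ρs x = infConv Λ ρs x := by
      intro x hx
      obtain ⟨y, hyA, hsum, hval⟩ := hMAIN x hx
      obtain ⟨-, -, -, -, hleastx⟩ := infConv_isLeast hKΛ hcontρ (hDsubΔ hx)
      rw [infConv_eq_sInf]
      apply IsLeast.csInf_eq
      constructor
      · exact ⟨y, hyA, hsum, hval⟩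
      · rintro t ⟨y', hy', hsum', rfl⟩
        exact hleastx.2 ⟨y', fun i => hAwsub i (hy' i), hsum', rfl⟩
    refine ⟨hpartA, ?_⟩
    -- part (b)
    intro v hdim
    choose bv hbv using fun i => amin_nonempty (hAwK i) (hAwne i) (hcontρA i) v
    have hcvxρA : ∀ i, ConvexOn ℝ (amin (Λ i) (φs i) w) (ρs i) :=
      fun i => (hcvxρ i).subset (hAwsub i) (hAwconv i)
    have hSCamin : cell (∑ i, amin (Λ i) (φs i) w) (infConv (fun i => amin (Λ i) (φs i) w) ρs) v
        = amin (∑ i, amin (Λ i) (φs i) w) (infConv (fun i => amin (Λ i) (φs i) w) ρs) v :=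
      cell_inf_eq_amin hAwK hcontρA hbv
    have hSCsum : cell (∑ i, amin (Λ i) (φs i) w) (infConv (fun i => amin (Λ i) (φs i) w) ρs) v
        = ∑ i, amin (amin (Λ i) (φs i) w) (ρs i) v := cell_inf_eq_sum_amin hAwK hcontρA hbv
    have hBconv : ∀ i, Convex ℝ (amin (amin (Λ i) (φs i) w) (ρs i) v) :=
      fun i => amin_convex (hAwconv i) (hcvxρA i) v
    have hSCne : (cell (∑ i, amin (Λ i) (φs i) w)
        (infConv (fun i => amin (Λ i) (φs i) w) ρs) v).Nonempty := by
      rw [hSCsum]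
      exact ⟨∑ i, bv i, mem_sum_sets.mpr ⟨bv, hbv, rfl⟩⟩
    have hSCconv : Convex ℝ (cell (∑ i, amin (Λ i) (φs i) w)
        (infConv (fun i => amin (Λ i) (φs i) w) ρs) v) := by
      rw [hSCsum]; exact convex_sum_sets _ _ fun i _ => hBconv i
    have hSCsubD : cell (∑ i, amin (Λ i) (φs i) w)
        (infConv (fun i => amin (Λ i) (φs i) w) ρs) v
        ⊆ cell (∑ i, Λ i) (infConv Λ φs) w := by
      rw [hSCamin, hDeq]; exact amin_subset
    obtain ⟨x₁, hx₁⟩ := interior_nonempty_of_dimAff hSCconv hSCne hdim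
    have hx₁int : x₁ ∈ interior (∑ i, Λ i) := interior_mono (hSCsubD.trans hDsubΔ) hx₁
    obtain ⟨v', hv'⟩ := exists_amin_of_mem_interior hρconv hMρ hx₁int
    have hx₁SC : x₁ ∈ cell (∑ i, amin (Λ i) (φs i) w)
        (infConv (fun i => amin (Λ i) (φs i) w) ρs) v := interior_subset hx₁
    -- dot v + ρ is constant on the small cell
    have hconstant : ∀ u ∈ cell (∑ i, amin (Λ i) (φs i) w)
        (infConv (fun i => amin (Λ i) (φs i) w) ρs) v,
        dot v u + infConv Λ ρs u = dot v x₁ + infConv Λ ρs x₁ := by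
      intro u hu
      rw [hSCamin] at hu
      have hx₁' := hx₁SC
      rw [hSCamin] at hx₁'
      have e1 := hu.2 x₁ hx₁'.1
      have e2 := hx₁'.2 u hu.1
      have r1 := hpartA u (hSCsubD (by rw [hSCamin]; exact hu))
      have r2 := hpartA x₁ (hSCsubD hx₁SC)
      rw [r1, r2] at e1 e2
      linarith
    -- the small cell is contained in the ρ-cell in direction v'
    have hSCsubBig : cell (∑ i, amin (Λ i) (φs i) w)
        (infConv (fun i => amin (Λ i) (φs i) w) ρs) v
        ⊆ amin (∑ i, Λ i) (infConv Λ ρs) v' := by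
      intro u hu
      have huΔ : u ∈ ∑ i, Λ i := hDsubΔ (hSCsubD hu)
      refine ⟨huΔ, fun z hz => ?_⟩
      have hkey : dot v' u + infConv Λ ρs u ≤ dot v' x₁ + infConv Λ ρs x₁ := by
        obtain ⟨ε, hε, hball⟩ := Metric.isOpen_iff.mp isOpen_interior x₁ hx₁
        by_cases hux : u = x₁
        · rw [hux]
        · set δ : ℝ := ε / (2 * (‖x₁ - u‖ + 1)) with hδdef
          have hnorm : (0:ℝ) < ‖x₁ - u‖ := by
            rw [norm_pos_iff, sub_ne_zero]
            exact fun h => hux h.symm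
          have hδpos : 0 < δ := by positivity
          have hmem : x₁ + δ • (x₁ - u) ∈ cell (∑ i, amin (Λ i) (φs i) w)
              (infConv (fun i => amin (Λ i) (φs i) w) ρs) v := by
            apply interior_subset
            apply hball
            rw [Metric.mem_ball, dist_eq_norm]
            have heq : x₁ + δ • (x₁ - u) - x₁ = δ • (x₁ - u) := by abel
            rw [heq, norm_smul, Real.norm_eq_abs, abs_of_pos hδpos]
            have h2 : δ * (‖x₁ - u‖ + 1) = ε / 2 := by
              rw [hδdef]; field_simp
            nlinarith
          have hpΔ : x₁ + δ • (x₁ - u) ∈ ∑ i, Λ i := hDsubΔ (hSCsubD hmem)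
          have h5 := hv'.2 _ hpΔ
          have h6 := hconstant _ hmem
          have h7 := hconstant u hu
          have e1 : dot v' (x₁ + δ • (x₁ - u)) = dot v' x₁ + δ * (dot v' x₁ - dot v' u) := by
            rw [dot_add, dot_smul, dot_sub_right]
          have e2 : dot v (x₁ + δ • (x₁ - u)) = dot v x₁ + δ * (dot v x₁ - dot v u) := by
            rw [dot_add, dot_smul, dot_sub_right]
          rw [e1] at h5
          rw [e2] at h6
          -- eliminate ρ at the reflected point and divide by δ
          have hstep : dot v' u - dot v u ≤ dot v' x₁ - dot v x₁ := by
            nlinarith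
          linarith
      exact le_trans hkey (hv'.2 z hz)
    -- dimension bookkeeping
    have hbig : dimAff (cell (∑ i, Λ i) (infConv Λ ρs) v') = n := by
      rw [cell_eq_amin hv']
      have h1 := dimAff_mono hSCsubBig
      have h2 := dimAff_le_rank (amin (∑ i, Λ i) (infConv Λ ρs) v')
      omega
    have htightv := htight v' hbig
    have hgoal_eq : ∀ i, comp (fun i => amin (Λ i) (φs i) w) ρs
        (cell (∑ i, amin (Λ i) (φs i) w) (infConv (fun i => amin (Λ i) (φs i) w) ρs) v) i
        = amin (amin (Λ i) (φs i) w) (ρs i) v := comp_eq_amin hAwK hcontρA hbv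
    have hBsubComp : ∀ i, amin (amin (Λ i) (φs i) w) (ρs i) v ⊆
        comp Λ ρs (cell (∑ i, Λ i) (infConv Λ ρs) v') i := by
      intro i b hb
      rw [← hgoal_eq i] at hb
      obtain ⟨y, ⟨hy, hymem, hyopt⟩, rfl⟩ := hb
      refine ⟨y, ⟨fun j => hAwsub j (hy j), ?_, ?_⟩, rfl⟩
      · rw [cell_eq_amin hv']
        exact hSCsubBig hymem
      · rw [← hpartA _ (hSCsubD hymem)]
        exact hyopt
    have hlow : n ≤ ∑ i, dimAff (amin (amin (Λ i) (φs i) w) (ρs i) v) := by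
      have h1 : dimAff (cell (∑ i, amin (Λ i) (φs i) w)
          (infConv (fun i => amin (Λ i) (φs i) w) ρs) v)
          = dimAff (∑ i, amin (amin (Λ i) (φs i) w) (ρs i) v) := congrArg dimAff hSCsum
      have h2 := dimAff_sum_le Finset.univ (fun i => amin (amin (Λ i) (φs i) w) (ρs i) v)
      omega
    have hup : (∑ i, dimAff (amin (amin (Λ i) (φs i) w) (ρs i) v)) ≤ n := by
      calc (∑ i, dimAff (amin (amin (Λ i) (φs i) w) (ρs i) v))
          ≤ ∑ i, dimAff (comp Λ ρs (cell (∑ i, Λ i) (infConv Λ ρs) v') i) :=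
            Finset.sum_le_sum fun i _ => dimAff_mono (hBsubComp i)
        _ = n := htightv
    calc (∑ i, dimAff (comp (fun i => amin (Λ i) (φs i) w) ρs
          (cell (∑ i, amin (Λ i) (φs i) w) (infConv (fun i => amin (Λ i) (φs i) w) ρs) v) i))
        = ∑ i, dimAff (amin (amin (Λ i) (φs i) w) (ρs i) v) :=
          Finset.sum_congr rfl fun i _ => congrArg dimAff (hgoal_eq i)
      _ = n := le_antisymm hup hlow
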